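/- If g is a log-concave density on [v_min, v_max], then the truncated mean m(v̄) = E[v | v ≤ v̄] = (∫_{v_min}^{v̄} t g(t) dt)/G(v̄) is differentiable and satisfies 0 < m'(v̄) < 1 for v̄ ∈ (v_min, v_max). -/

import Mathlib

open intervalIntegral

/-- Key consequence of log-concavity: the hazard-type ratio comparison
`g b * ∫_{vmin}^a g < g a * ∫_{vmin}^b g` for `vmin ≤ a < b ≤ vmax`. -/
lemma g_ratio_lemma
    (vmin vmax : ℝ) (hv : vmin < vmax) (g : ℝ → ℝ)
    (hg_cont : ContinuousOn g (Set.Icc vmin vmax))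
    (hg_pos : ∀ x ∈ Set.Icc vmin vmax, 0 < g x)
    (hg_logconcave : ∀ x ∈ Set.Icc vmin vmax, ∀ y ∈ Set.Icc vmin vmax,
      ∀ a b : ℝ, 0 ≤ a → 0 ≤ b → a + b = 1 →
        g x ^ a * g y ^ b ≤ g (a * x + b * y))
    {a b : ℝ} (ha : vmin ≤ a) (hab : a < b) (hb : b ≤ vmax) :
    g b * (∫ t in vmin..a, g t) < g a * (∫ t in vmin..b, g t) := by
  have haI : a ∈ Set.Icc vmin vmax := ⟨ha, hab.le.trans hb⟩
  have hbI : b ∈ Set.Icc vmin vmax := ⟨by linarith, hb⟩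
  have hga : 0 < g a := hg_pos a haI
  have hgb : 0 < g b := hg_pos b hbI
  -- integrability helpers
  have hgi : ∀ {c d : ℝ}, vmin ≤ c → c ≤ d → d ≤ vmax →
      IntervalIntegrable g MeasureTheory.volume c d := by
    intro c d hc hcd hd
    exact (hg_cont.mono (by rw [Set.uIcc_of_le hcd]; exact Set.Icc_subset_Icc hc hd)).intervalIntegrable
  -- pointwise inequality from log-concavity
  have hpoint : ∀ t ∈ Set.Icc vmin a, g b * g t ≤ g a * g (t + (b - a)) := by
    intro t ht
    have hbt : 0 < b - t := by linarith [ht.2]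
    set lam := (b - a) / (b - t) with hlamdef
    set mu := (a - t) / (b - t) with hmudef
    have hlam : 0 ≤ lam := div_nonneg (by linarith) hbt.le
    have hmu : 0 ≤ mu := div_nonneg (by linarith [ht.2]) hbt.le
    have hsum : lam + mu = 1 := by
      rw [hlamdef, hmudef, ← add_div, div_eq_one_iff_eq hbt.ne']
      ring
    have htI : t ∈ Set.Icc vmin vmax := ⟨ht.1, by linarith [ht.2]⟩
    have hgt : 0 < g t := hg_pos t htI
    have h1 := hg_logconcave t htI b hbI lam mu hlam hmu hsum
    have h2 := hg_logconcave t htI b hbI mu lam hmu hlam (by linarith)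
    have e1 : lam * t + mu * b = a := by
      rw [hlamdef, hmudef]; field_simp; ring
    have e2 : mu * t + lam * b = t + (b - a) := by
      rw [hlamdef, hmudef]; field_simp; ring
    rw [e1] at h1
    rw [e2] at h2
    have hprod : (g t ^ lam * g b ^ mu) * (g t ^ mu * g b ^ lam) = g t * g b := by
      rw [mul_mul_mul_comm, ← Real.rpow_add hgt, ← Real.rpow_add hgb, hsum,
        show mu + lam = (1 : ℝ) by linarith, Real.rpow_one, Real.rpow_one]
    have hle : g t * g b ≤ g a * g (t + (b - a)) := by
      calc g t * g b = (g t ^ lam * g b ^ mu) * (g t ^ mu * g b ^ lam) := hprod.symm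
        _ ≤ g a * g (t + (b - a)) :=
          mul_le_mul h1 h2
            (le_of_lt (mul_pos (Real.rpow_pos_of_pos hgt _) (Real.rpow_pos_of_pos hgb _)))
            hga.le
    linarith [hle]
  -- continuity of the shifted function
  have hshift : ContinuousOn (fun t => g (t + (b - a))) (Set.Icc vmin a) := by
    apply hg_cont.comp ((continuous_add_right (b - a)).continuousOn)
    intro t ht
    simp only [id_eq]
    exact ⟨by linarith [ht.1], by linarith [ht.2]⟩
  have hstep1 : (∫ t in vmin..a, g b * g t) ≤ ∫ t in vmin..a, g a * g (t + (b - a)) := by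
    apply intervalIntegral.integral_mono_on ha
    · exact ((hgi le_rfl ha (by linarith)).const_mul (g b))
    · exact ((hshift.mono (by rw [Set.uIcc_of_le ha])).intervalIntegrable).const_mul (g a)
    · intro x hx; exact hpoint x hx
  have hend : a + (b - a) = b := by ring
  have hstep2 : (∫ t in vmin..a, g a * g (t + (b - a)))
      = g a * ∫ t in (vmin + (b - a))..b, g t := by
    rw [intervalIntegral.integral_const_mul, intervalIntegral.integral_comp_add_right, hend]
  have hmid : vmin ≤ vmin + (b - a) := by linarith
  have hmid2 : vmin + (b - a) ≤ b := by linarith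
  have hsplit : (∫ t in vmin..b, g t)
      = (∫ t in vmin..(vmin + (b - a)), g t) + ∫ t in (vmin + (b - a))..b, g t :=
    (intervalIntegral.integral_add_adjacent_intervals
      (hgi le_rfl hmid (by linarith)) (hgi hmid hmid2 hb)).symm
  have hpos0 : 0 < ∫ t in vmin..(vmin + (b - a)), g t := by
    apply intervalIntegral_pos_of_pos_on (hgi le_rfl hmid (by linarith))
    · intro x hx
      exact hg_pos x ⟨hx.1.le, by linarith [hx.2]⟩
    · linarith
  calc g b * (∫ t in vmin..a, g t) = ∫ t in vmin..a, g b * g t :=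
        (intervalIntegral.integral_const_mul _ _).symm
    _ ≤ g a * ∫ t in (vmin + (b - a))..b, g t := hstep1.trans_eq hstep2
    _ < g a * (∫ t in vmin..b, g t) := by
        rw [hsplit]
        have := mul_lt_mul_of_pos_left (by linarith :
          (∫ t in (vmin + (b - a))..b, g t) <
            (∫ t in vmin..(vmin + (b - a)), g t) + ∫ t in (vmin + (b - a))..b, g t) hga
        linarith

/-- Bagnoli–Bergstrom: with a log-concave density g, the truncated
mean m(v̄) = (∫_{v_min}^{v̄} t g(t) dt)/G(v̄) is differentiable with slope in (0,1)
on (v_min, v_max). -/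
theorem truncated_mean_slope
    (vmin vmax : ℝ) (hv : vmin < vmax)
    (g : ℝ → ℝ)
    (hg_cont : ContinuousOn g (Set.Icc vmin vmax))
    (hg_pos : ∀ x ∈ Set.Icc vmin vmax, 0 < g x)
    (hg_density : ∫ t in vmin..vmax, g t = 1)
    (hg_logconcave : ∀ x ∈ Set.Icc vmin vmax, ∀ y ∈ Set.Icc vmin vmax,
      ∀ a b : ℝ, 0 ≤ a → 0 ≤ b → a + b = 1 →
        g x ^ a * g y ^ b ≤ g (a * x + b * y))
    (G : ℝ → ℝ) (hG : ∀ v, G v = ∫ t in vmin..v, g t)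
    (m : ℝ → ℝ) (hm : ∀ v, m v = (∫ t in vmin..v, t * g t) / G v) :
    ∀ v ∈ Set.Ioo vmin vmax, ∃ d : ℝ, HasDerivAt m d v ∧ 0 < d ∧ d < 1 := by
  intro v hvI
  obtain ⟨hv1, hv2⟩ := hvI
  have hvIcc : v ∈ Set.Icc vmin vmax := ⟨hv1.le, hv2.le⟩
  -- continuous extension of g to ℝ by clamping
  set g1 : ℝ → ℝ := fun t => g (max vmin (min t vmax)) with hg1def
  have hcmem : ∀ t : ℝ, max vmin (min t vmax) ∈ Set.Icc vmin vmax :=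
    fun t => ⟨le_max_left _ _, max_le hv.le (min_le_right _ _)⟩
  have hg1cont : Continuous g1 :=
    hg_cont.comp_continuous (continuous_const.max (continuous_id.min continuous_const)) hcmem
  have hg1eq : ∀ t ∈ Set.Icc vmin vmax, g1 t = g t := by
    intro t ht
    simp only [hg1def, min_eq_left ht.2, max_eq_right ht.1]
  set G1 : ℝ → ℝ := fun w => ∫ t in vmin..w, g1 t with hG1def
  set N1 : ℝ → ℝ := fun w => ∫ t in vmin..w, t * g1 t with hN1def
  have hG1deriv : ∀ x : ℝ, HasDerivAt G1 (g1 x) x := fun x =>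
    integral_hasDerivAt_right (hg1cont.intervalIntegrable _ _)
      (hg1cont.stronglyMeasurableAtFilter _ _) hg1cont.continuousAt
  have htg1cont : Continuous fun t : ℝ => t * g1 t := continuous_id.mul hg1cont
  have hN1deriv : ∀ x : ℝ, HasDerivAt N1 (x * g1 x) x := fun x =>
    integral_hasDerivAt_right (htg1cont.intervalIntegrable _ _)
      (htg1cont.stronglyMeasurableAtFilter _ _) htg1cont.continuousAt
  have hG1cont : Continuous G1 :=
    continuous_iff_continuousAt.2 fun x => (hG1deriv x).continuousAt
  -- equalities on the interval
  have hsub : ∀ {w : ℝ}, w ∈ Set.Icc vmin vmax → Set.uIcc vmin w ⊆ Set.Icc vmin vmax := by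
    intro w hw
    rw [Set.uIcc_of_le hw.1]
    exact Set.Icc_subset_Icc le_rfl hw.2
  have hGeq : ∀ w ∈ Set.Icc vmin vmax, G w = G1 w := by
    intro w hw
    rw [hG]
    exact intervalIntegral.integral_congr fun x hx => (hg1eq x (hsub hw hx)).symm
  have hNeq : ∀ w ∈ Set.Icc vmin vmax, (∫ t in vmin..w, t * g t) = N1 w := by
    intro w hw
    exact intervalIntegral.integral_congr fun x hx => by rw [hg1eq x (hsub hw hx)]
  have hev : m =ᶠ[nhds v] fun w => N1 w / G1 w := by
    filter_upwards [Icc_mem_nhds hv1 hv2] with w hw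
    rw [hm, hNeq w hw, hGeq w hw]
  -- positivity
  have hg1v : 0 < g1 v := by rw [hg1eq v hvIcc]; exact hg_pos v hvIcc
  have hG1pos : ∀ w ∈ Set.Ioc vmin vmax, 0 < G1 w := by
    intro w hw
    apply intervalIntegral_pos_of_pos_on (hg1cont.intervalIntegrable _ _)
    · intro x hx
      have hxI : x ∈ Set.Icc vmin vmax := ⟨hx.1.le, hx.2.le.trans hw.2⟩
      rw [hg1eq x hxI]; exact hg_pos x hxI
    · exact hw.1
  have hG1v : 0 < G1 v := hG1pos v ⟨hv1, hv2.le⟩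
  -- the derivative
  set d : ℝ := (v * g1 v * G1 v - N1 v * g1 v) / (G1 v) ^ 2 with hddef
  have hdm : HasDerivAt m d v :=
    (((hN1deriv v).div (hG1deriv v) hG1v.ne')).congr_of_eventuallyEq hev
  -- lower bound: numerator positive
  have hnum : 0 < v * G1 v - N1 v := by
    have e : v * G1 v - N1 v = ∫ t in vmin..v, (v - t) * g1 t := by
      have e1 : ∀ t : ℝ, (v - t) * g1 t = v * g1 t - t * g1 t := fun t => by ring
      simp only [e1]
      rw [intervalIntegral.integral_sub (Continuous.intervalIntegrable (u := fun t => v * g1 t) (continuous_const.mul hg1cont) _ _)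
        (htg1cont.intervalIntegrable _ _), intervalIntegral.integral_const_mul]
    rw [e]
    apply intervalIntegral_pos_of_pos_on
      (Continuous.intervalIntegrable (u := fun t => (v - t) * g1 t) ((continuous_const.sub continuous_id').mul hg1cont) _ _)
    · intro x hx
      have hxI : x ∈ Set.Icc vmin vmax := ⟨hx.1.le, (hx.2.le.trans hv2.le)⟩
      have : 0 < g1 x := by rw [hg1eq x hxI]; exact hg_pos x hxI
      exact mul_pos (by linarith [hx.2]) this
    · exact hv1
  have hdpos : 0 < d := by
    rw [hddef]
    apply div_pos
    · nlinarith [mul_pos hg1v hnum]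
    · positivity
  -- integration by parts identity
  have hIBP : v * G1 v - N1 v = ∫ t in vmin..v, G1 t := by
    have h := intervalIntegral.integral_eq_sub_of_hasDerivAt
      (a := vmin) (b := v) (f := fun t => t * G1 t - N1 t) (f' := G1)
      (fun x _ => by
        have h1 : HasDerivAt (fun t => t * G1 t) (1 * G1 x + x * g1 x) x :=
          (hasDerivAt_id x).mul (hG1deriv x)
        have h2 : HasDerivAt (fun t => t * G1 t - N1 t) (1 * G1 x + x * g1 x - x * g1 x) x :=
          h1.sub (hN1deriv x)
        exact h2.congr_deriv (by ring))
      (hG1cont.intervalIntegrable _ _)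
    have hz1 : G1 vmin = 0 := intervalIntegral.integral_same
    have hz2 : N1 vmin = 0 := intervalIntegral.integral_same
    rw [h]
    simp only [hz1, hz2]
    ring
  -- strict comparison using log-concavity
  have hcomp : 0 < ∫ t in vmin..v, (g1 t * G1 v - g1 v * G1 t) := by
    apply intervalIntegral_pos_of_pos_on
      (Continuous.intervalIntegrable (u := fun t => g1 t * G1 v - g1 v * G1 t) ((hg1cont.mul continuous_const).sub (continuous_const.mul hG1cont)) _ _)
    · intro x hx
      have hxI : x ∈ Set.Icc vmin vmax := ⟨hx.1.le, hx.2.le.trans hv2.le⟩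
      have hkey := g_ratio_lemma vmin vmax hv g hg_cont hg_pos hg_logconcave
        hx.1.le hx.2 hv2.le
      have hGx : G1 x = ∫ t in vmin..x, g t :=
        intervalIntegral.integral_congr fun t ht => hg1eq t (hsub hxI ht)
      have hGv : G1 v = ∫ t in vmin..v, g t :=
        intervalIntegral.integral_congr fun t ht => hg1eq t (hsub hvIcc ht)
      have hg1x : g1 x = g x := hg1eq x hxI
      have hg1v' : g1 v = g v := hg1eq v hvIcc
      rw [hGx, hGv, hg1x, hg1v']
      linarith [hkey]
    · exact hv1
  have e2 : (∫ t in vmin..v, (g1 t * G1 v - g1 v * G1 t))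
      = G1 v * G1 v - g1 v * ∫ t in vmin..v, G1 t := by
    rw [intervalIntegral.integral_sub (Continuous.intervalIntegrable (u := fun t => g1 t * G1 v) (hg1cont.mul continuous_const) _ _)
      (Continuous.intervalIntegrable (u := fun t => g1 v * G1 t) (continuous_const.mul hG1cont) _ _),
      intervalIntegral.integral_mul_const, intervalIntegral.integral_const_mul]
  have hdlt : d < 1 := by
    rw [hddef, div_lt_one (by positivity : (0:ℝ) < (G1 v) ^ 2)]
    have h3 := hcomp
    rw [e2] at h3
    have : v * g1 v * G1 v - N1 v * g1 v = g1 v * (v * G1 v - N1 v) := by ring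
    rw [this, hIBP]
    nlinarith [h3]
  exact ⟨d, hdm, hdpos, hdlt⟩
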